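/- Suppose α = 1 and γ > 1 (β, δ ∈ ℝ arbitrary). Then the density d_i exists for every i ∈ ℕ ∪ {∞}, with d_i = 0 for every finite i ∈ ℕ and d_∞ = 1 − 1/γ; that is, d = (0, 0, 0̄, 1 − 1/γ). -/
import Mathlib


open scoped BigOperators

noncomputable section

/-- The Beatty set `S(τ,η) = {⌊τk+η⌋ : k ∈ ℕ} ∩ ℕ`, viewed as a set of positive integers
(inside `ℤ`).  Here `ℕ` denotes the positive integers, so `k` ranges over `k ≥ 1`. -/
def BeattySet (τ η : ℝ) : Set ℤ :=
  {x : ℤ | 0 < x ∧ ∃ k : ℕ, 0 < k ∧ ⌊τ * (k : ℝ) + η⌋ = x}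

/-- The sets `A_i` (for `1 ≤ i < ∞`) associated to the data `(α,β,γ,δ)` and the map `f`
(which satisfies `f(⌊αk+β⌋) = ⌊γk+δ⌋` for `k ≥ 1`):
`A_1 = ℕ \ (S(α,β) ∪ S(γ,δ))`, and for `i ≥ 2`,
`A_i = {x ∈ S(α,β) \ S(γ,δ) : f^j(x) ∈ S(α,β) ∩ S(γ,δ) for 1 ≤ j ≤ i−2, and
f^{i−1}(x) ∈ S(γ,δ) \ S(α,β)}`. -/
def ASet (α β γ δ : ℝ) (f : ℤ → ℤ) (i : ℕ) : Set ℤ :=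
  if i = 1 then {x : ℤ | 0 < x} \ (BeattySet α β ∪ BeattySet γ δ)
  else (BeattySet α β \ BeattySet γ δ) ∩
    {x : ℤ | (∀ j : ℕ, 1 ≤ j → j ≤ i - 2 → f^[j] x ∈ BeattySet α β ∩ BeattySet γ δ) ∧
      f^[i - 1] x ∈ BeattySet γ δ \ BeattySet α β}

/-- The set `A_∞ = {x ∈ S(α,β) \ S(γ,δ) : f^j(x) ∈ S(α,β) ∩ S(γ,δ) for all j ≥ 1}`. -/
def AInf (α β γ δ : ℝ) (f : ℤ → ℤ) : Set ℤ :=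
  (BeattySet α β \ BeattySet γ δ) ∩
    {x : ℤ | ∀ j : ℕ, 1 ≤ j → f^[j] x ∈ BeattySet α β ∩ BeattySet γ δ}

/-- `A` has (Banach) density `d`: the limit of `|A ∩ [n₁,n₂]| / (n₂ − n₁)` as `n₂ − n₁ → ∞`
over intervals `[n₁,n₂]` of positive integers exists and equals `d`. -/
def HasBanachDensity (A : Set ℤ) (d : ℝ) : Prop :=
  ∀ ε : ℝ, 0 < ε → ∃ N : ℕ, ∀ n₁ n₂ : ℕ, 0 < n₁ → n₁ + N ≤ n₂ →
    |((A ∩ Set.Icc (n₁ : ℤ) (n₂ : ℤ)).ncard : ℝ) / ((n₂ : ℝ) - (n₁ : ℝ)) - d| < ε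

end

private lemma hbd_finite {A : Set ℤ} (hA : A.Finite) : HasBanachDensity A 0 := by
  intro ε hε
  obtain ⟨N, hN⟩ := exists_nat_gt ((A.ncard : ℝ) / ε)
  refine ⟨N + 1, fun n₁ n₂ hn₁ hn => ?_⟩
  have hL : (N : ℝ) + 1 ≤ (n₂ : ℝ) - n₁ := by
    have : (n₁ : ℝ) + (N + 1) ≤ n₂ := by exact_mod_cast hn
    linarith
  have hL0 : (0 : ℝ) < (n₂ : ℝ) - n₁ := by linarith
  have hcard : ((A ∩ Set.Icc (n₁:ℤ) (n₂:ℤ)).ncard : ℝ) ≤ A.ncard := by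
    exact_mod_cast Set.ncard_le_ncard Set.inter_subset_left hA
  have hcard0 : (0:ℝ) ≤ ((A ∩ Set.Icc (n₁:ℤ) (n₂:ℤ)).ncard : ℝ) := by positivity
  rw [sub_zero, abs_of_nonneg (by positivity)]
  rw [div_lt_iff₀ hL0]
  have h1 : (A.ncard : ℝ) < N * ε := by
    rw [div_lt_iff₀ hε] at hN; linarith
  have h2 : (N:ℝ) * ε ≤ ((n₂:ℝ) - n₁) * ε := by nlinarith
  linarith

private lemma beatty_mono (γ δ : ℝ) (hγ : 1 < γ) :
    StrictMono (fun k : ℤ => ⌊γ * (k : ℝ) + δ⌋) := by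
  apply strictMono_int_of_lt_succ
  intro n
  have h : γ * (n : ℝ) + δ + 1 ≤ γ * ((n : ℝ) + 1) + δ := by nlinarith
  have : (⌊γ * (n:ℝ) + δ⌋ : ℤ) + 1 ≤ ⌊γ * ((n:ℝ)+1) + δ⌋ := by
    rw [Int.le_floor]
    push_cast
    calc ((⌊γ * (n:ℝ) + δ⌋:ℝ) + 1) ≤ γ * (n:ℝ) + δ + 1 := by
          have := Int.floor_le (γ * (n:ℝ) + δ); linarith
      _ ≤ _ := h
  simpa using this.trans_eq (by push_cast; ring_nf)

private lemma beatty_count (γ δ : ℝ) (hγ : 1 < γ) (a n₂ : ℤ)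
    (ha1 : 1 ≤ a) (haδ : δ < a) (h : a ≤ n₂) :
    |((BeattySet γ δ ∩ Set.Icc a n₂).ncard : ℝ) - ((n₂:ℝ) - a + 1)/γ| ≤ 2 := by
  have hγ0 : (0:ℝ) < γ := by linarith
  set u : ℝ := ((a:ℝ) - δ)/γ with hu
  set v : ℝ := ((n₂:ℝ) + 1 - δ)/γ with hv
  set k₁ : ℤ := ⌈u⌉ with hk₁
  set k₂ : ℤ := ⌈v⌉ - 1 with hk₂
  have hu0 : 0 < u := by apply div_pos <;> push_cast <;> linarith
  have hk₁1 : 1 ≤ k₁ := by have : (0:ℤ) < ⌈u⌉ := Int.ceil_pos.mpr hu0; omega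
  have huv : u ≤ v := by
    have han : ((a:ℝ)) ≤ (n₂:ℝ) := by exact_mod_cast h
    rw [hu, hv]; gcongr <;> linarith
  have hset : BeattySet γ δ ∩ Set.Icc a n₂ = (fun k : ℤ => ⌊γ * (k:ℝ) + δ⌋) '' Set.Icc k₁ k₂ := by
    ext x
    simp only [BeattySet, Set.mem_inter_iff, Set.mem_setOf_eq, Set.mem_Icc, Set.mem_image]
    constructor
    · rintro ⟨⟨hx0, k, hk0, hkx⟩, hax, hxn⟩
      refine ⟨(k:ℤ), ⟨?_, ?_⟩, by exact_mod_cast hkx⟩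
      · rw [hk₁, Int.ceil_le, hu, div_le_iff₀ hγ0]
        have : (a:ℝ) ≤ γ * (k:ℝ) + δ := by
          have h2 : (a : ℝ) ≤ (⌊γ * (k:ℝ) + δ⌋ : ℝ) := by exact_mod_cast hkx ▸ hax
          have := Int.floor_le (γ * (k:ℝ) + δ)
          linarith
        push_cast; linarith
      · rw [hk₂, Int.le_sub_one_iff, Int.lt_ceil, hv, lt_div_iff₀ hγ0]
        have h2 : (⌊γ * (k:ℝ) + δ⌋ : ℤ) ≤ n₂ := hkx ▸ hxn
        have h3 : γ * (k:ℝ) + δ < (n₂:ℝ) + 1 := by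
          have := Int.lt_floor_add_one (γ * (k:ℝ) + δ)
          have h4 : ((⌊γ * (k:ℝ) + δ⌋:ℤ):ℝ) ≤ (n₂:ℝ) := by exact_mod_cast h2
          linarith
        push_cast; linarith
    · rintro ⟨k, ⟨hk1, hk2⟩, rfl⟩
      have hk1' : u ≤ (k:ℝ) := le_trans (Int.le_ceil u) (by exact_mod_cast hk1)
      have hk2' : (k:ℝ) < v := by
        have : k < ⌈v⌉ := by omega
        exact_mod_cast Int.lt_ceil.mp this
      have hga : (a:ℝ) ≤ γ * (k:ℝ) + δ := by
        rw [hu, div_le_iff₀ hγ0] at hk1'; linarith [mul_comm γ (k:ℝ)]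
      have hgn : γ * (k:ℝ) + δ < (n₂:ℝ) + 1 := by
        rw [hv, lt_div_iff₀ hγ0] at hk2'; linarith [mul_comm γ (k:ℝ)]
      have hax : a ≤ ⌊γ * (k:ℝ) + δ⌋ := Int.le_floor.mpr (by push_cast; linarith)
      have hxn : ⌊γ * (k:ℝ) + δ⌋ ≤ n₂ := by
        have := Int.floor_lt.mpr (show γ * (k:ℝ) + δ < ((n₂+1 : ℤ):ℝ) by push_cast; linarith)
        omega
      have hk0 : 1 ≤ k := le_trans hk₁1 hk1
      refine ⟨⟨by omega, k.toNat, by omega, ?_⟩, hax, hxn⟩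
      have : ((k.toNat : ℕ) : ℝ) = (k : ℝ) := by
        exact_mod_cast congrArg (Int.cast : ℤ → ℝ) (Int.toNat_of_nonneg (show (0:ℤ) ≤ k by omega))
      rw [this]
  rw [hset, Set.ncard_image_of_injOn ((beatty_mono γ δ hγ).injective.injOn)]
  rw [show (Set.Icc k₁ k₂).ncard = (k₂ + 1 - k₁).toNat by
    rw [← Finset.coe_Icc, Set.ncard_coe_finset, Int.card_Icc]]
  have hvu : v - u = ((n₂:ℝ) - a + 1)/γ := by rw [hu, hv]; ring
  have hcu := Int.ceil_lt_add_one u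
  have hcu2 := Int.le_ceil u
  have hcv := Int.ceil_lt_add_one v
  have hcv2 := Int.le_ceil v
  rcases le_or_gt k₁ k₂ with hle | hlt
  · have : ((k₂ + 1 - k₁).toNat : ℝ) = (k₂:ℝ) + 1 - k₁ := by
      exact_mod_cast congrArg (Int.cast : ℤ → ℝ) (Int.toNat_of_nonneg (show (0:ℤ) ≤ k₂+1-k₁ by omega))
    rw [this, ← hvu, hk₂, hk₁]
    push_cast
    rw [abs_le]; constructor <;> linarith
  · have hz : (k₂ + 1 - k₁).toNat = 0 := by omega
    rw [hz, ← hvu]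
    have : ⌈v⌉ ≤ ⌈u⌉ := by omega
    have h5 : v - u < 1 := by
      have : ((⌈v⌉:ℤ):ℝ) ≤ ((⌈u⌉:ℤ):ℝ) := by exact_mod_cast this
      linarith
    rw [abs_le]; push_cast; constructor <;> linarith

/-- Suppose `α = 1` and `γ > 1`.  Then the density `d_i` exists for
every `i ∈ ℕ ∪ {∞}`, with `d_i = 0` for every finite `i` and `d_∞ = 1 − 1/γ`. -/
theorem densities_of_alpha_eq_one (β γ δ : ℝ) (hγ : 1 < γ) (f : ℤ → ℤ)
    (hf : ∀ k : ℕ, 0 < k → f ⌊(1 : ℝ) * (k : ℝ) + β⌋ = ⌊γ * (k : ℝ) + δ⌋) :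
    (∀ i : ℕ, 1 ≤ i → HasBanachDensity (ASet 1 β γ δ f i) 0) ∧
      HasBanachDensity (AInf 1 β γ δ f) (1 - 1 / γ) := by
  set b : ℤ := ⌊β⌋ with hbdef
  have hγ0 : (0:ℝ) < γ := by linarith
  -- characterization of S(1, β)
  have hB1 : ∀ x : ℤ, x ∈ BeattySet 1 β ↔ (0 < x ∧ b + 1 ≤ x) := by
    intro x
    constructor
    · rintro ⟨hx0, k, hk0, hkx⟩
      refine ⟨hx0, ?_⟩
      rw [one_mul] at hkx
      have : ⌊(k:ℝ) + β⌋ = (k:ℤ) + b := by exact_mod_cast Int.floor_intCast_add (k:ℤ) β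
      omega
    · rintro ⟨hx0, hxb⟩
      refine ⟨hx0, (x - b).toNat, by omega, ?_⟩
      have h1 : ((x - b).toNat : ℤ) = x - b := Int.toNat_of_nonneg (by omega)
      have h2 : (((x-b).toNat : ℕ) : ℝ) = ((x - b : ℤ) : ℝ) := by
        exact_mod_cast congrArg (Int.cast : ℤ → ℝ) h1
      rw [one_mul, h2, show ((x - b : ℤ):ℝ) + β = β + ((x - b : ℤ):ℝ) by ring]
      rw [Int.floor_add_intCast]
      omega
  -- the threshold M
  obtain ⟨M, hM1, hMb, hMδ, hMg⟩ : ∃ M : ℤ, 1 ≤ M ∧ b + 1 ≤ M ∧ δ < (M:ℝ) ∧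
      ∀ x : ℤ, M ≤ x → (x:ℝ) + 1 ≤ γ * ((x:ℝ) - b) + δ := by
    refine ⟨max (max 1 (b+1)) (max (⌊δ⌋+1) ⌈(γ*(b:ℝ) - δ + 1)/(γ-1)⌉), by simp, ?_, ?_, ?_⟩
    · exact le_max_of_le_left (le_max_right _ _)
    · have h1 : (⌊δ⌋ : ℝ) + 1 ≤ ((max (⌊δ⌋+1) ⌈(γ*(b:ℝ) - δ + 1)/(γ-1)⌉ : ℤ) : ℝ) := by
        exact_mod_cast le_max_left _ _
      have h2 := Int.lt_floor_add_one δ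
      have h3 : ((max (⌊δ⌋+1) ⌈(γ*(b:ℝ) - δ + 1)/(γ-1)⌉ : ℤ):ℝ) ≤
          ((max (max 1 (b+1)) (max (⌊δ⌋+1) ⌈(γ*(b:ℝ) - δ + 1)/(γ-1)⌉) : ℤ):ℝ) := by
        exact_mod_cast le_max_right _ _
      linarith
    · intro x hx
      have h1 : (⌈(γ*(b:ℝ) - δ + 1)/(γ-1)⌉ : ℤ) ≤ x :=
        le_trans (le_trans (le_max_right _ _) (le_max_right _ _)) hx
      have h2 : (γ*(b:ℝ) - δ + 1)/(γ-1) ≤ (x:ℝ) := le_trans (Int.le_ceil _) (by exact_mod_cast h1)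
      rw [div_le_iff₀ (by linarith)] at h2
      nlinarith
  -- formula for f on [b+1, ∞)
  have hfx : ∀ x : ℤ, b + 1 ≤ x → f x = ⌊γ * ((x:ℝ) - b) + δ⌋ := by
    intro x hx
    have h1 : ((x - b).toNat : ℤ) = x - b := Int.toNat_of_nonneg (by omega)
    have h2 : (((x-b).toNat : ℕ) : ℝ) = ((x:ℝ) - b) := by
      have := congrArg (Int.cast : ℤ → ℝ) h1; push_cast at this; exact this
    have h3 := hf (x - b).toNat (by omega)
    rw [one_mul, h2] at h3
    have h4 : ⌊(x:ℝ) - b + β⌋ = x := by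
      rw [show (x:ℝ) - b + β = β + ((x - b : ℤ):ℝ) by push_cast; ring, Int.floor_add_intCast]
      omega
    rw [h4] at h3
    exact h3
  -- one step
  have hstep : ∀ x : ℤ, M ≤ x → (x + 1 ≤ f x ∧ f x ∈ BeattySet 1 β ∧ f x ∈ BeattySet γ δ) := by
    intro x hx
    have hxb : b + 1 ≤ x := le_trans hMb hx
    have hform := hfx x hxb
    have hgrow : x + 1 ≤ f x := by
      rw [hform, Int.le_floor]
      push_cast
      exact hMg x hx
    have hfpos : 0 < f x := by omega
    refine ⟨hgrow, (hB1 _).mpr ⟨hfpos, by omega⟩, hfpos, (x - b).toNat, by omega, ?_⟩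
    have h2 : (((x-b).toNat : ℕ) : ℝ) = ((x:ℝ) - b) := by
      have := congrArg (Int.cast : ℤ → ℝ) (Int.toNat_of_nonneg (show (0:ℤ) ≤ x - b by omega))
      push_cast at this; exact this
    rw [h2, hform]
  -- iterates
  have hiter : ∀ j : ℕ, ∀ x : ℤ, M ≤ x → (M ≤ f^[j] x ∧
      (1 ≤ j → f^[j] x ∈ BeattySet 1 β ∩ BeattySet γ δ)) := by
    intro j
    induction j with
    | zero => intro x hx; exact ⟨hx, by omega⟩
    | succ n ih =>
      intro x hx
      obtain ⟨h1, _⟩ := ih x hx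
      obtain ⟨hg, hb1, hbg⟩ := hstep _ h1
      rw [Function.iterate_succ_apply']
      exact ⟨by omega, fun _ => ⟨hb1, hbg⟩⟩
  constructor
  · -- finite densities are 0
    intro i hi
    apply hbd_finite
    apply Set.Finite.subset (Set.finite_Icc 1 M)
    intro x hx
    rcases Nat.eq_or_lt_of_le hi with h1 | h2
    · rw [ASet, if_pos h1.symm] at hx
      obtain ⟨hx0, hxn⟩ := hx
      simp only [Set.mem_setOf_eq] at hx0
      have hxb : x ∉ BeattySet 1 β := fun h => hxn (Or.inl h)
      rw [hB1] at hxb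
      have : ¬ (b + 1 ≤ x) := fun h => hxb ⟨hx0, h⟩
      exact Set.mem_Icc.mpr ⟨by omega, by omega⟩
    · rw [ASet, if_neg (by omega)] at hx
      obtain ⟨⟨hxB1, _⟩, _, hlast⟩ := hx
      obtain ⟨hx0, hxb⟩ := (hB1 x).mp hxB1
      by_contra hxout
      have hxM : M ≤ x := by
        simp only [Set.mem_Icc, not_and_or, not_le] at hxout
        omega
      have hM' : M ≤ f^[i-1] x := (hiter (i-1) x hxM).1
      exact hlast.2 ((hB1 _).mpr ⟨by omega, by omega⟩)
  · -- density of A_∞ is 1 - 1/γ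
    intro ε hε
    refine ⟨M.toNat + (⌈(2*(M:ℝ)+2)/ε⌉).toNat + 1, fun n₁ n₂ hn₁ hn => ?_⟩
    set N : ℕ := M.toNat + (⌈(2*(M:ℝ)+2)/ε⌉).toNat + 1 with hNdef
    have hMT : ((M.toNat : ℤ)) = M := Int.toNat_of_nonneg (by omega)
    have hnZ : (n₁:ℤ) + (N:ℤ) ≤ n₂ := by exact_mod_cast hn
    have hNM : (M:ℤ) ≤ (N:ℤ) := by
      rw [hNdef]; push_cast; omega
    set a : ℤ := max (n₁:ℤ) M with hadef
    have ha1 : 1 ≤ a := le_trans (by exact_mod_cast hn₁) (le_max_left _ _)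
    have haM : M ≤ a := le_max_right _ _
    have han₁ : (n₁:ℤ) ≤ a := le_max_left _ _
    have han₂ : a ≤ n₂ := by
      have h1 : (n₁:ℤ) ≥ 1 := by exact_mod_cast hn₁
      have : max (n₁:ℤ) M ≤ (n₁:ℤ) + M - 1 := by
        rcases max_cases (n₁:ℤ) M with ⟨h, _⟩ | ⟨h, _⟩ <;> omega
      omega
    have hamn : a - n₁ ≤ M - 1 := by
      rcases max_cases (n₁:ℤ) M with ⟨h, _⟩ | ⟨h, _⟩ <;> omega
    -- the key set identity
    have hEQ : AInf 1 β γ δ f ∩ Set.Icc a n₂ = Set.Icc a n₂ \ BeattySet γ δ := by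
      ext x
      constructor
      · rintro ⟨⟨⟨_, hxng⟩, _⟩, hxI⟩
        exact ⟨hxI, hxng⟩
      · rintro ⟨hxI, hxng⟩
        have hxM : M ≤ x := le_trans haM (Set.mem_Icc.mp hxI).1
        refine ⟨⟨⟨(hB1 x).mpr ⟨by omega, by omega⟩, hxng⟩, fun j hj => (hiter j x hxM).2 hj⟩, hxI⟩
    set S1 : Set ℤ := Set.Icc a n₂ \ BeattySet γ δ with hS1
    set S2 : Set ℤ := BeattySet γ δ ∩ Set.Icc a n₂ with hS2
    have hIccFin : (Set.Icc a n₂).Finite := Set.finite_Icc a n₂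
    have hS1fin : S1.Finite := hIccFin.subset Set.diff_subset
    have hS2fin : S2.Finite := hIccFin.subset Set.inter_subset_right
    have hAfin : (AInf 1 β γ δ f ∩ Set.Icc (n₁:ℤ) (n₂:ℤ)).Finite :=
      (Set.finite_Icc _ _).subset Set.inter_subset_right
    -- partition of Icc a n₂
    have hpart : S1.ncard = (Set.Icc a n₂).ncard - S2.ncard := by
      have : S1 = Set.Icc a n₂ \ S2 := by
        ext x; simp only [hS1, hS2, Set.mem_diff, Set.mem_inter_iff]; tauto
      rw [this]
      exact Set.ncard_diff Set.inter_subset_right hS2fin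
    have hS2le : S2.ncard ≤ (Set.Icc a n₂).ncard :=
      Set.ncard_le_ncard Set.inter_subset_right hIccFin
    -- lower bound
    have hlow : S1.ncard ≤ (AInf 1 β γ δ f ∩ Set.Icc (n₁:ℤ) (n₂:ℤ)).ncard := by
      apply Set.ncard_le_ncard _ hAfin
      rw [← hEQ]
      exact Set.inter_subset_inter_right _ (Set.Icc_subset_Icc han₁ le_rfl)
    -- upper bound
    have hupp : (AInf 1 β γ δ f ∩ Set.Icc (n₁:ℤ) (n₂:ℤ)).ncard ≤
        S1.ncard + (Set.Icc (n₁:ℤ) (a-1)).ncard := by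
      refine le_trans (Set.ncard_le_ncard ?_ (hS1fin.union (Set.finite_Icc _ _)))
        (Set.ncard_union_le _ _)
      rintro x ⟨hA, hI⟩
      rcases le_or_gt a x with h | h
      · left; rw [← hEQ]; exact ⟨hA, Set.mem_Icc.mpr ⟨h, (Set.mem_Icc.mp hI).2⟩⟩
      · right; exact Set.mem_Icc.mpr ⟨(Set.mem_Icc.mp hI).1, by omega⟩
    -- cardinalities as reals
    have hIccR : ((Set.Icc a n₂).ncard : ℝ) = (n₂:ℝ) + 1 - a := by
      rw [← Finset.coe_Icc, Set.ncard_coe_finset, Int.card_Icc]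
      have := congrArg (Int.cast : ℤ → ℝ) (Int.toNat_of_nonneg (show (0:ℤ) ≤ n₂+1-a by omega))
      push_cast at this ⊢
      linarith
    have hsmallR : ((Set.Icc (n₁:ℤ) (a-1)).ncard : ℝ) ≤ (M:ℝ) := by
      rw [← Finset.coe_Icc, Set.ncard_coe_finset, Int.card_Icc]
      have h0 : a - 1 + 1 - (n₁:ℤ) ≤ M := by linarith [hamn]
      have h1 : (a - 1 + 1 - (n₁:ℤ)).toNat ≤ M.toNat := Int.toNat_le_toNat h0
      calc ((a - 1 + 1 - (n₁:ℤ)).toNat : ℝ) ≤ (M.toNat : ℝ) := by exact_mod_cast h1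
        _ = (M:ℝ) := by exact_mod_cast congrArg (Int.cast : ℤ → ℝ) hMT
    have hS1R : (S1.ncard : ℝ) = ((n₂:ℝ) + 1 - a) - S2.ncard := by
      rw [hpart, Nat.cast_sub hS2le, hIccR]
    -- Beatty count
    have hbc := beatty_count γ δ hγ a n₂ ha1 (lt_of_lt_of_le hMδ (by exact_mod_cast haM)) han₂
    rw [← hS2] at hbc
    push_cast at hbc
    -- arithmetic
    set c : ℝ := ((AInf 1 β γ δ f ∩ Set.Icc (n₁:ℤ) (n₂:ℤ)).ncard : ℝ) with hc
    set Sc : ℝ := (S2.ncard : ℝ) with hSc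
    set L : ℝ := (n₂:ℝ) - n₁ with hL
    set P : ℝ := (n₂:ℝ) + 1 - a with hP
    set g : ℝ := 1/γ with hg
    clear_value N a S1 S2 c Sc L P g
    have hg0 : 0 < g := by rw [hg]; positivity
    have hg1 : g ≤ 1 := by rw [hg]; rw [div_le_one hγ0]; linarith
    have hMR : (1:ℝ) ≤ M := by exact_mod_cast hM1
    have hPL1 : P - L ≤ 1 := by
      rw [hP, hL]
      have : ((n₁:ℤ):ℝ) ≤ (a:ℝ) := by exact_mod_cast han₁
      push_cast at this ⊢
      linarith
    have hPL2 : 1 - (M:ℝ) ≤ P - L := by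
      rw [hP, hL]
      have : ((a:ℤ):ℝ) - ((n₁:ℕ):ℤ) ≤ (M:ℝ) - 1 := by exact_mod_cast hamn
      push_cast at this ⊢
      linarith
    have hclow : P - Sc ≤ c := by
      rw [hc, ← hS1R]; exact_mod_cast hlow
    have hcupp : c ≤ P - Sc + M := by
      have h1 : c ≤ (S1.ncard : ℝ) + ((Set.Icc (n₁:ℤ) (a-1)).ncard : ℝ) := by
        rw [hc]; exact_mod_cast hupp
      rw [hS1R] at h1
      linarith
    have hbc' : -2 ≤ Sc - P * g ∧ Sc - P * g ≤ 2 := by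
      have hPg : ((n₂:ℝ) - a + 1)/γ = P * g := by
        rw [hP, hg]; ring
      rw [hPg] at hbc
      exact abs_le.mp hbc
    have hLN : (N:ℝ) ≤ L := by
      rw [hL]
      have : ((n₁:ℕ):ℝ) + ((N:ℕ):ℝ) ≤ ((n₂:ℕ):ℝ) := by exact_mod_cast hn
      linarith
    have hNbig : (2*(M:ℝ)+2)/ε < (N:ℝ) := by
      have h1 : (2*(M:ℝ)+2)/ε ≤ (⌈(2*(M:ℝ)+2)/ε⌉ : ℝ) := Int.le_ceil _
      have h2 : (⌈(2*(M:ℝ)+2)/ε⌉ : ℤ) ≤ ((⌈(2*(M:ℝ)+2)/ε⌉).toNat : ℤ) := Int.self_le_toNat _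
      have h3 : (((⌈(2*(M:ℝ)+2)/ε⌉).toNat : ℕ) : ℝ) + 1 ≤ (N:ℝ) := by
        have : (⌈(2*(M:ℝ)+2)/ε⌉).toNat + 1 ≤ N := by rw [hNdef]; omega
        exact_mod_cast this
      have h4 : ((⌈(2*(M:ℝ)+2)/ε⌉ : ℤ):ℝ) ≤ (((⌈(2*(M:ℝ)+2)/ε⌉).toNat : ℕ) : ℝ) := by
        exact_mod_cast h2
      linarith
    have hL0 : 0 < L := by
      have : (0:ℝ) < (N:ℝ) := by
        have : (2*(M:ℝ)+2)/ε > 0 := by positivity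
        linarith
      linarith
    have hεL : 2*(M:ℝ) + 2 < ε * L := by
      rw [div_lt_iff₀ hε] at hNbig
      nlinarith
    have hexpand : (P - L) * (1 - g) = P - L - P*g + L*g := by ring
    have key1 : (1 - (M:ℝ)) * (1-g) ≤ (P - L) * (1-g) :=
      mul_le_mul_of_nonneg_right hPL2 (by linarith)
    have key2 : (P - L) * (1-g) ≤ 1 * (1-g) :=
      mul_le_mul_of_nonneg_right hPL1 (by linarith)
    have key3 : ((M:ℝ) - 1) * (1-g) ≤ (M - 1) * 1 :=
      mul_le_mul_of_nonneg_left (by linarith) (by linarith)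
    have key4 : (1 - (M:ℝ)) * (1-g) = -(((M:ℝ) - 1) * (1-g)) := by ring
    have hd : (1:ℝ) - 1/γ = 1 - g := by rw [hg]
    have hLg : L * (1 - g) = L - L*g := by ring
    have hone : (1:ℝ) * (1-g) = 1 - g := by ring
    have hmain : |c - L * (1 - 1/γ)| ≤ 2*(M:ℝ) + 2 := by
      rw [hd, abs_le]
      constructor
      · linarith [hbc'.1, hbc'.2, hexpand, key1, key3, key4, hclow, hMR, hLg, hg0]
      · linarith [hbc'.1, hbc'.2, hexpand, key2, hcupp, hMR, hLg, hone, hg0]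
    have hre : c / L - (1 - 1/γ) = (c - L * (1 - 1/γ))/L := by
      rw [sub_div, mul_div_cancel_left₀ _ (ne_of_gt hL0)]
    rw [← hd, hre, abs_div, abs_of_pos hL0, div_lt_iff₀ hL0]
    calc |c - L * (1 - 1/γ)| ≤ 2*(M:ℝ) + 2 := hmain
      _ < ε * L := hεL
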